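/- Let L > 0, f : [0,1] → [0,1] be L-Lipschitz, and (t_n), (x_n) sequences in [0,1] with x_{n+1} = (1−t_n)x_n + t_n f(x_n) for all n. Suppose there is δ ∈ (0,1) with t_n ≤ (2−δ)/(L+1) for all n. Then for every ε > 0 and every g : ℕ → ℕ there exists N ≤ Ψ(ε,g) with |x_i − x_j| ≤ ε for all i, j ∈ [N, N+g(N)], where Ψ(ε,g) := P_B with h_m(n) := g(m+n), P_0 := 0, P_{n+1} := P_n + (h̃_{P_n})^(⌈1/ε⌉+1)(0) (where h̃(n) = n + h(n) and the exponent denotes iteration), T := ⌈log_{(1−δ/2)} ε⌉ + 1, and B := T + g̃(P_T) + 1 with g̃(n) = n + g(n). -/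

import Mathlib

theorem metastability_KM_lipschitz
    (L : ℝ) (hL : 0 < L) (f : ℝ → ℝ)
    (hf : ∀ a ∈ Set.Icc (0:ℝ) 1, f a ∈ Set.Icc (0:ℝ) 1)
    (hlip : ∀ a ∈ Set.Icc (0:ℝ) 1, ∀ b ∈ Set.Icc (0:ℝ) 1, |f a - f b| ≤ L * |a - b|)
    (t x : ℕ → ℝ) (ht : ∀ n, t n ∈ Set.Icc (0:ℝ) 1) (hx : ∀ n, x n ∈ Set.Icc (0:ℝ) 1)
    (hiter : ∀ n, x (n+1) = (1 - t n) * x n + t n * f (x n))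
    (δ : ℝ) (hδ : δ ∈ Set.Ioo (0:ℝ) 1) (htδ : ∀ n, t n ≤ (2 - δ)/(L + 1))
    (ε : ℝ) (hε : 0 < ε) (g : ℕ → ℕ) :
    ∃ N, (N ≤
      (let P : ℕ → ℕ := fun n =>
         Nat.rec 0 (fun _ Pn => Pn + (fun k => k + g (Pn + k))^[⌈1/ε⌉₊ + 1] 0) n
       let T : ℕ := (⌈Real.logb (1 - δ/2) ε⌉ + 1).toNat
       let B : ℕ := T + (P T + g (P T)) + 1
       P B)) ∧
      ∀ i, N ≤ i → i ≤ N + g N → ∀ j, N ≤ j → j ≤ N + g N → |x i - x j| ≤ ε := by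
  obtain ⟨hδ0, hδ1⟩ := hδ
  have hL1 : (0:ℝ) < L + 1 := by linarith
  have hx0 : ∀ m, (0:ℝ) ≤ x m := fun m => (hx m).1
  have hx1 : ∀ m, x m ≤ 1 := fun m => (hx m).2
  have hstep : ∀ m, x (m+1) = x m + t m * (f (x m) - x m) := fun m => by rw [hiter m]; ring
  have ht0 : ∀ m, 0 ≤ t m := fun m => (ht m).1
  have htn : ∀ m, (L+1) * t m ≤ 2 - δ := by
    intro m
    have h3 := htδ m
    rw [le_div_iff₀ hL1] at h3
    linarith
  -- monotonicity of w ↦ L*w + f w on [0,1]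
  have hA : ∀ a b : ℝ, 0 ≤ a → a ≤ b → b ≤ 1 → L * a + f a ≤ L * b + f b := by
    intro a b ha hab hb1
    have h1 := hlip a ⟨ha, le_trans hab hb1⟩ b ⟨le_trans ha hab, hb1⟩
    have h2 : f a - f b ≤ L * |a - b| := le_trans (le_abs_self _) h1
    rw [abs_sub_comm, abs_of_nonneg (by linarith : (0:ℝ) ≤ b - a)] at h2
    nlinarith [h2]
  -- step bounds
  have SU : ∀ m, x m ≤ f (x m) →
      x m ≤ x (m+1) ∧ (L+1) * x (m+1) ≤ (L+1) * x m + (2-δ) * (f (x m) - x m) := by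
    intro m hU
    have h0 := hstep m
    constructor
    · have h1 : 0 ≤ t m * (f (x m) - x m) := mul_nonneg (ht0 m) (by linarith)
      linarith [h0]
    · have h4 : ((L+1) * t m) * (f (x m) - x m) ≤ (2-δ) * (f (x m) - x m) :=
        mul_le_mul_of_nonneg_right (htn m) (by linarith)
      have h5 : (L+1) * x (m+1) = (L+1) * x m + ((L+1) * t m) * (f (x m) - x m) := by
        rw [h0]; ring
      linarith
  have SD : ∀ m, f (x m) ≤ x m →
      x (m+1) ≤ x m ∧ (L+1) * x m + (2-δ) * (f (x m) - x m) ≤ (L+1) * x (m+1) := by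
    intro m hD
    have h0 := hstep m
    constructor
    · have h1 : t m * (f (x m) - x m) ≤ 0 :=
        mul_nonpos_of_nonneg_of_nonpos (ht0 m) (by linarith)
      linarith [h0]
    · have h4 : (2-δ) * (f (x m) - x m) ≤ ((L+1) * t m) * (f (x m) - x m) :=
        mul_le_mul_of_nonpos_right (htn m) (by linarith)
      have h5 : (L+1) * x (m+1) = (L+1) * x m + ((L+1) * t m) * (f (x m) - x m) := by
        rw [h0]; ring
      linarith
  -- trivial case ε ≥ 1
  rcases le_or_gt 1 ε with hge1 | hlt1
  · exact ⟨0, Nat.zero_le _, fun i _ _ j _ _ =>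
      abs_le.mpr ⟨by linarith [hx0 i, hx1 j], by linarith [hx1 i, hx0 j]⟩⟩
  -- ε < 1
  set K : ℕ := ⌈1/ε⌉₊ + 1 with hK
  set F : ℕ → ℕ := fun n =>
    Nat.rec 0 (fun _ Pn => Pn + (fun k => k + g (Pn + k))^[K] 0) n with hF
  set TT : ℕ := (⌈Real.logb (1 - δ/2) ε⌉ + 1).toNat with hTT
  set BB : ℕ := TT + (F TT + g (F TT)) + 1 with hBB
  show ∃ N, N ≤ F BB ∧
      ∀ i, N ≤ i → i ≤ N + g N → ∀ j, N ≤ j → j ≤ N + g N → |x i - x j| ≤ ε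
  have hFsucc : ∀ n, F (n+1) = F n + (fun q => q + g (F n + q))^[K] 0 := fun n => rfl
  have hFmono : Monotone F :=
    monotone_nat_of_le_succ (fun n => by rw [hFsucc n]; exact Nat.le_add_right _ _)
  have hTTBB : TT ≤ BB := by omega
  -- pigeonhole on a monotone block
  have pigeon : ∀ (kb : ℕ) (y : ℕ → ℝ), kb + 1 ≤ BB →
      (∀ m, 0 ≤ y m ∧ y m ≤ 1) →
      (∀ a b : ℕ, F kb ≤ a → a ≤ b → b ≤ F (kb+1) → y a ≤ y b) →
      (∀ i j : ℕ, |x i - x j| ≤ |y i - y j|) →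
      ∃ N, N ≤ F BB ∧ ∀ i, N ≤ i → i ≤ N + g N → ∀ j, N ≤ j → j ≤ N + g N →
        |x i - x j| ≤ ε := by
    intro kb y hkb hy hmono htr
    set c : ℕ → ℕ := fun i => (fun q => q + g (F kb + q))^[i] 0 with hc
    have hcs : ∀ i, c (i+1) = c i + g (F kb + c i) := by
      intro i
      rw [hc]
      exact Function.iterate_succ_apply' _ _ _
    have hcm : Monotone c :=
      monotone_nat_of_le_succ (fun i => by rw [hcs i]; omega)
    have hFk : F (kb+1) = F kb + c K := hFsucc kb
    have hKc : (1:ℝ) ≤ (K:ℝ) * ε := by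
      have h1 : (1/ε : ℝ) ≤ (⌈1/ε⌉₊ : ℝ) := Nat.le_ceil _
      have h2 : ((⌈1/ε⌉₊ : ℝ) + 1) = (K:ℝ) := by rw [hK]; push_cast; ring
      have h3 : (1/ε : ℝ) * ε = 1 := by field_simp
      have h4 : (1/ε : ℝ) * ε ≤ (⌈1/ε⌉₊ : ℝ) * ε := mul_le_mul_of_nonneg_right h1 (le_of_lt hε)
      rw [← h2]
      nlinarith [h3, h4, hε]
    have hEx : ∃ i, i < K ∧ y (F kb + c (i+1)) - y (F kb + c i) ≤ ε := by
      by_contra hco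
      push_neg at hco
      have hsum : ∑ i ∈ Finset.range K, (y (F kb + c (i+1)) - y (F kb + c i))
          = y (F kb + c K) - y (F kb + c 0) :=
        Finset.sum_range_sub (fun i => y (F kb + c i)) K
      have h3 : ∑ _i ∈ Finset.range K, ε
          < ∑ i ∈ Finset.range K, (y (F kb + c (i+1)) - y (F kb + c i)) :=
        Finset.sum_lt_sum_of_nonempty ⟨0, Finset.mem_range.mpr (Nat.succ_pos _)⟩
          (fun i hi => hco i (Finset.mem_range.mp hi))
      rw [Finset.sum_const, Finset.card_range, nsmul_eq_mul, hsum] at h3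
      have h4 := (hy (F kb + c K)).2
      have h5 := (hy (F kb + c 0)).1
      linarith
    obtain ⟨i, hiK, hflat⟩ := hEx
    refine ⟨F kb + c i, ?_, ?_⟩
    · have h6 : F kb + c i ≤ F (kb+1) := by
        rw [hFk]
        have := hcm (le_of_lt hiK)
        omega
      exact le_trans h6 (hFmono hkb)
    · intro i' hi1 hi2 j' hj1 hj2
      have hgN : F kb + c i + g (F kb + c i) = F kb + c (i+1) := by rw [hcs i]; omega
      have hub : F kb + c (i+1) ≤ F (kb+1) := by
        rw [hFk]
        have h10 : c (i+1) ≤ c K := hcm (by omega : i + 1 ≤ K)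
        omega
      have hi2' : i' ≤ F kb + c (i+1) := by omega
      have hj2' : j' ≤ F kb + c (i+1) := by omega
      have hyl1 : y (F kb + c i) ≤ y i' :=
        hmono _ _ (Nat.le_add_right _ _) hi1 (le_trans hi2' hub)
      have hyu1 : y i' ≤ y (F kb + c (i+1)) :=
        hmono _ _ (le_trans (Nat.le_add_right _ _) hi1) hi2' hub
      have hyl2 : y (F kb + c i) ≤ y j' :=
        hmono _ _ (Nat.le_add_right _ _) hj1 (le_trans hj2' hub)
      have hyu2 : y j' ≤ y (F kb + c (i+1)) :=
        hmono _ _ (le_trans (Nat.le_add_right _ _) hj1) hj2' hub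
      have h7 : |y i' - y j'| ≤ ε := abs_le.mpr ⟨by linarith, by linarith⟩
      exact le_trans (htr i' j') h7
  -- confinement after a down-flip
  have confD : ∀ n : ℕ, f (x n) < x n → x (n+1) ≤ f (x (n+1)) →
      ∀ m : ℕ, n + 1 ≤ m →
        x (n+1) ≤ x m ∧ x m ≤ x (n+1) + (1 - δ) * (x n - x (n+1)) := by
    intro n hdn hup
    have hsd := SD n (le_of_lt hdn)
    have hBv : x (n+1) ≤ x n := hsd.1
    have hkeyD : (2-δ) * (L * x n + f (x n)) ≤ (L+1) * x (n+1) + (1-δ) * ((L+1) * x n) := by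
      linarith [hsd.2]
    have inv : ∀ m, n + 1 ≤ m →
        (x (n+1) ≤ x m ∧ x m ≤ x (n+1) + (1-δ) * (x n - x (n+1))) ∧
        (f (x m) < x m → ∃ w : ℝ, x (n+1) ≤ w ∧ w ≤ x m ∧
          (L+1) * (x m + (1-δ) * w) ≤ (2-δ) * (L * w + f w)) := by
      intro m hm
      induction m, hm using Nat.le_induction with
      | base =>
        refine ⟨⟨le_refl _, ?_⟩, fun hc => absurd hup (not_le.mpr hc)⟩
        have : 0 ≤ (1-δ) * (x n - x (n+1)) := mul_nonneg (by linarith) (by linarith)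
        linarith
      | succ m hm ih =>
        obtain ⟨⟨hlo, hhi⟩, hdninv⟩ := ih
        have hxmv : x m ≤ x n := by
          have h1 : 0 ≤ δ * (x n - x (n+1)) := mul_nonneg (le_of_lt hδ0) (by linarith)
          linarith
        rcases le_or_gt (x m) (f (x m)) with hU | hD
        · -- up step
          have hsu := SU m hU
          have hAm : L * x m + f (x m) ≤ L * x n + f (x n) :=
            hA (x m) (x n) (hx0 m) hxmv (hx1 n)
          have hup2 : (L+1) * x (m+1) + (1-δ) * ((L+1) * x m)
              ≤ (2-δ) * (L * x m + f (x m)) := by linarith [hsu.2]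
          have hAprod : (2-δ) * (L * x m + f (x m)) ≤ (2-δ) * (L * x n + f (x n)) :=
            mul_le_mul_of_nonneg_left hAm (by linarith)
          have hfloorprod : (1-δ) * ((L+1) * x (n+1)) ≤ (1-δ) * ((L+1) * x m) :=
            mul_le_mul_of_nonneg_left
              (mul_le_mul_of_nonneg_left hlo (le_of_lt hL1)) (by linarith)
          refine ⟨⟨le_trans hlo hsu.1, ?_⟩, ?_⟩
          · have h3 : (L+1) * x (m+1) ≤ (L+1) * (x (n+1) + (1-δ) * (x n - x (n+1))) := by
              linarith [hup2, hAprod, hkeyD, hfloorprod]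
            exact (mul_le_mul_iff_of_pos_left hL1).mp h3
          · intro _
            exact ⟨x m, hlo, hsu.1, by linarith [hup2]⟩
        · -- down step
          obtain ⟨w, hwB, hwm, hwkey⟩ := hdninv hD
          have hsd' := SD m (le_of_lt hD)
          have hAw : L * w + f w ≤ L * x m + f (x m) :=
            hA w (x m) (le_trans (hx0 (n+1)) hwB) hwm (hx1 m)
          have h4 : (2-δ) * (L * w + f w) ≤ (2-δ) * (L * x m + f (x m)) :=
            mul_le_mul_of_nonneg_left hAw (by linarith)
          have hdn2 : (L+1) * (δ * x m + (1-δ) * w) ≤ (L+1) * x (m+1) := by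
            linarith [hsd'.2, h4, hwkey]
          have hmid : δ * x m + (1-δ) * w ≤ x (m+1) := (mul_le_mul_iff_of_pos_left hL1).mp hdn2
          have hδxm : δ * x (n+1) ≤ δ * x m :=
            mul_le_mul_of_nonneg_left hlo (le_of_lt hδ0)
          have h1δw : (1-δ) * x (n+1) ≤ (1-δ) * w :=
            mul_le_mul_of_nonneg_left hwB (by linarith)
          refine ⟨⟨by linarith, le_trans hsd'.1 hhi⟩, ?_⟩
          intro _
          have hδw : δ * w ≤ δ * x m := mul_le_mul_of_nonneg_left hwm (le_of_lt hδ0)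
          have hmul : (L+1) * x (m+1) ≤ (L+1) * x m :=
            mul_le_mul_of_nonneg_left hsd'.1 (le_of_lt hL1)
          exact ⟨w, hwB, by linarith, by linarith [hwkey, hmul]⟩
    exact fun m hm => (inv m hm).1
  -- confinement after an up-flip
  have confU : ∀ n : ℕ, x n < f (x n) → f (x (n+1)) ≤ x (n+1) →
      ∀ m : ℕ, n + 1 ≤ m →
        x (n+1) - (1 - δ) * (x (n+1) - x n) ≤ x m ∧ x m ≤ x (n+1) := by
    intro n hupn hdnn
    have hsu := SU n (le_of_lt hupn)
    have hvX : x n ≤ x (n+1) := hsu.1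
    have hkeyU : (L+1) * x (n+1) + (1-δ) * ((L+1) * x n) ≤ (2-δ) * (L * x n + f (x n)) := by
      linarith [hsu.2]
    have inv : ∀ m, n + 1 ≤ m →
        (x (n+1) - (1-δ) * (x (n+1) - x n) ≤ x m ∧ x m ≤ x (n+1)) ∧
        (x m < f (x m) → ∃ w : ℝ, x m ≤ w ∧ w ≤ x (n+1) ∧
          (2-δ) * (L * w + f w) ≤ (L+1) * (x m + (1-δ) * w)) := by
      intro m hm
      induction m, hm using Nat.le_induction with
      | base =>
        refine ⟨⟨?_, le_refl _⟩, fun hc => absurd hdnn (not_le.mpr hc)⟩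
        have : 0 ≤ (1-δ) * (x (n+1) - x n) := mul_nonneg (by linarith) (by linarith)
        linarith
      | succ m hm ih =>
        obtain ⟨⟨hlo, hhi⟩, hupinv⟩ := ih
        have hxmv : x n ≤ x m := by
          have h1 : 0 ≤ δ * (x (n+1) - x n) := mul_nonneg (le_of_lt hδ0) (by linarith)
          linarith
        rcases lt_or_ge (x m) (f (x m)) with hU | hD
        · -- up step
          obtain ⟨w, hmw, hwX, hwkey⟩ := hupinv hU
          have hsu' := SU m (le_of_lt hU)
          have hAw : L * x m + f (x m) ≤ L * w + f w :=
            hA (x m) w (hx0 m) hmw (le_trans hwX (hx1 (n+1)))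
          have h4 : (2-δ) * (L * x m + f (x m)) ≤ (2-δ) * (L * w + f w) :=
            mul_le_mul_of_nonneg_left hAw (by linarith)
          have hup2 : (L+1) * x (m+1) ≤ (L+1) * (δ * x m + (1-δ) * w) := by
            linarith [hsu'.2, h4, hwkey]
          have hmid : x (m+1) ≤ δ * x m + (1-δ) * w := (mul_le_mul_iff_of_pos_left hL1).mp hup2
          have hδxm : δ * x m ≤ δ * x (n+1) :=
            mul_le_mul_of_nonneg_left hhi (le_of_lt hδ0)
          have h1δw : (1-δ) * w ≤ (1-δ) * x (n+1) :=
            mul_le_mul_of_nonneg_left hwX (by linarith)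
          refine ⟨⟨le_trans hlo hsu'.1, by linarith⟩, ?_⟩
          intro _
          have hδw : δ * x m ≤ δ * w := mul_le_mul_of_nonneg_left hmw (le_of_lt hδ0)
          have hmul : (L+1) * x m ≤ (L+1) * x (m+1) :=
            mul_le_mul_of_nonneg_left hsu'.1 (le_of_lt hL1)
          exact ⟨w, by linarith, hwX, by linarith [hwkey, hmul]⟩
        · -- down step
          have hsd' := SD m hD
          have hAm : L * x n + f (x n) ≤ L * x m + f (x m) :=
            hA (x n) (x m) (hx0 n) hxmv (hx1 m)
          have hdn2 : (L+1) * x m + (2-δ) * (f (x m) - x m) ≤ (L+1) * x (m+1) := hsd'.2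
          have hAprod : (2-δ) * (L * x n + f (x n)) ≤ (2-δ) * (L * x m + f (x m)) :=
            mul_le_mul_of_nonneg_left hAm (by linarith)
          have hceilprod : (1-δ) * ((L+1) * x m) ≤ (1-δ) * ((L+1) * x (n+1)) :=
            mul_le_mul_of_nonneg_left
              (mul_le_mul_of_nonneg_left hhi (le_of_lt hL1)) (by linarith)
          refine ⟨⟨?_, le_trans hsd'.1 hhi⟩, ?_⟩
          · have h3 : (L+1) * (x (n+1) - (1-δ) * (x (n+1) - x n)) ≤ (L+1) * x (m+1) := by
              linarith [hdn2, hAprod, hkeyU, hceilprod]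
            exact (mul_le_mul_iff_of_pos_left hL1).mp h3
          · intro _
            refine ⟨x m, hsd'.1, hhi, ?_⟩
            linarith [hdn2]
    exact fun m hm => (inv m hm).1
  -- crossing lemmas
  have crossDU : ∀ (a d : ℕ), f (x a) < x a → x (a + d) ≤ f (x (a + d)) →
      ∃ n, a ≤ n ∧ n < a + d ∧ f (x n) < x n ∧ x (n+1) ≤ f (x (n+1)) := by
    intro a d
    induction d with
    | zero =>
      intro h1 h2
      rw [Nat.add_zero] at h2
      exact absurd h2 (not_le.mpr h1)
    | succ d ih =>
      intro h1 h2
      rcases le_or_gt (x (a + d)) (f (x (a + d))) with hup | hdn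
      · obtain ⟨n, hn1, hn2, hn3, hn4⟩ := ih h1 hup
        exact ⟨n, hn1, by omega, hn3, hn4⟩
      · refine ⟨a + d, Nat.le_add_right a d, by omega, hdn, ?_⟩
        have he : a + (d+1) = (a+d) + 1 := rfl
        rw [he] at h2
        exact h2
  have crossUD : ∀ (a d : ℕ), x a < f (x a) → f (x (a + d)) ≤ x (a + d) →
      ∃ n, a ≤ n ∧ n < a + d ∧ x n < f (x n) ∧ f (x (n+1)) ≤ x (n+1) := by
    intro a d
    induction d with
    | zero =>
      intro h1 h2
      rw [Nat.add_zero] at h2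
      exact absurd h2 (not_le.mpr h1)
    | succ d ih =>
      intro h1 h2
      rcases le_or_gt (f (x (a + d))) (x (a + d)) with hdn | hup
      · obtain ⟨n, hn1, hn2, hn3, hn4⟩ := ih h1 hdn
        exact ⟨n, hn1, by omega, hn3, hn4⟩
      · refine ⟨a + d, Nat.le_add_right a d, by omega, hup, ?_⟩
        have he : a + (d+1) = (a+d) + 1 := rfl
        rw [he] at h2
        exact h2
  -- main case split
  by_cases hex : ∃ kb, kb + 1 ≤ BB ∧
      ((∀ a, F kb ≤ a → a < F (kb+1) → x a ≤ f (x a)) ∨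
       (∀ a, F kb ≤ a → a < F (kb+1) → f (x a) ≤ x a))
  · -- Case 1: monotone block
    obtain ⟨kb, hkb, hs⟩ := hex
    rcases hs with hsgn | hsgn
    · -- nondecreasing
      have hmono : ∀ a b : ℕ, F kb ≤ a → a ≤ b → b ≤ F (kb+1) → x a ≤ x b := by
        intro a b ha hab hb
        obtain ⟨d, rfl⟩ : ∃ d, b = a + d := ⟨b - a, by omega⟩
        clear hab
        induction d with
        | zero => exact le_refl _
        | succ d ih =>
          have hb' : a + d ≤ F (kb+1) := by omega
          have h1 : x a ≤ x (a+d) := ih hb'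
          have h2 : x (a+d) ≤ x (a+d+1) :=
            (SU (a+d) (hsgn (a+d) (by omega) (by omega))).1
          have he : a + (d+1) = (a+d) + 1 := rfl
          rw [he]
          linarith
      obtain ⟨N, hN1, hN2⟩ := pigeon kb x hkb (fun m => ⟨hx0 m, hx1 m⟩) hmono
        (fun i j => le_refl _)
      exact ⟨N, hN1, hN2⟩
    · -- nonincreasing : use y = 1 - x
      have hmono : ∀ a b : ℕ, F kb ≤ a → a ≤ b → b ≤ F (kb+1) →
          (fun m => 1 - x m) a ≤ (fun m => 1 - x m) b := by
        intro a b ha hab hb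
        simp only
        obtain ⟨d, rfl⟩ : ∃ d, b = a + d := ⟨b - a, by omega⟩
        clear hab
        induction d with
        | zero => exact le_refl _
        | succ d ih =>
          have hb' : a + d ≤ F (kb+1) := by omega
          have h1 : (1:ℝ) - x a ≤ 1 - x (a+d) := ih hb'
          have h2 : x (a+d+1) ≤ x (a+d) :=
            (SD (a+d) (hsgn (a+d) (by omega) (by omega))).1
          have he : a + (d+1) = (a+d) + 1 := rfl
          rw [he]
          linarith
      obtain ⟨N, hN1, hN2⟩ := pigeon kb (fun m => 1 - x m) hkb
        (fun m => ⟨by show (0:ℝ) ≤ 1 - x m; linarith [hx1 m],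
          by show (1:ℝ) - x m ≤ 1; linarith [hx0 m]⟩) hmono
        (fun i j => by
          have he : (1 - x i) - (1 - x j) = x j - x i := by ring
          simp only [he]
          rw [abs_sub_comm])
      exact ⟨N, hN1, hN2⟩
  · -- Case 2: every block has a flip
    push_neg at hex
    have hAll : ∀ kb, kb + 1 ≤ BB →
        (∃ a, F kb ≤ a ∧ a < F (kb+1) ∧ f (x a) < x a) ∧
        (∃ a, F kb ≤ a ∧ a < F (kb+1) ∧ x a < f (x a)) := by
      intro kb hkb
      exact hex kb hkb
    have conf : ∀ kb, kb + 1 ≤ BB → ∃ n : ℕ, F kb ≤ n ∧ n + 1 < F (kb+1) ∧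
        ∃ lo hi : ℝ, (∀ m, n + 1 ≤ m → lo ≤ x m ∧ x m ≤ hi) ∧
          hi - lo ≤ (1-δ) * |x (n+1) - x n| := by
      intro kb hkb
      obtain ⟨⟨a, ha1, ha2, hadn⟩, ⟨a', ha1', ha2', haup⟩⟩ := hAll kb hkb
      rcases Nat.lt_trichotomy a a' with hlt | heq | hgt
      · -- a < a' : down-flip between
        have he : a + (a' - a) = a' := by omega
        obtain ⟨n, hn1, hn2, hn3, hn4⟩ := crossDU a (a' - a) hadn (by rw [he]; exact le_of_lt haup)
        rw [he] at hn2
        refine ⟨n, le_trans ha1 hn1, by omega, x (n+1),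
          x (n+1) + (1-δ) * (x n - x (n+1)), confD n hn3 hn4, ?_⟩
        have h7 : x (n+1) ≤ x n := (SD n (le_of_lt hn3)).1
        have habs : |x (n+1) - x n| = x n - x (n+1) := by
          rw [abs_sub_comm, abs_of_nonneg (by linarith)]
        rw [habs]
        linarith
      · exfalso
        rw [heq] at hadn
        linarith
      · -- a' < a : up-flip between
        have he : a' + (a - a') = a := by omega
        obtain ⟨n, hn1, hn2, hn3, hn4⟩ := crossUD a' (a - a') haup (by rw [he]; exact le_of_lt hadn)
        rw [he] at hn2
        refine ⟨n, le_trans ha1' hn1, by omega,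
          x (n+1) - (1-δ) * (x (n+1) - x n), x (n+1), confU n hn3 hn4, ?_⟩
        have h7 : x n ≤ x (n+1) := (SU n (le_of_lt hn3)).1
        have habs : |x (n+1) - x n| = x (n+1) - x n := abs_of_nonneg (by linarith)
        rw [habs]
        linarith
    -- chain the confinements
    have chain : ∀ jj : ℕ, jj + 1 ≤ TT → ∃ n : ℕ, n + 1 < F (jj+1) ∧
        ∃ lo hi : ℝ, (∀ m, n + 1 ≤ m → lo ≤ x m ∧ x m ≤ hi) ∧
          hi - lo ≤ (1-δ)^(jj+1) := by
      intro jj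
      induction jj with
      | zero =>
        intro h1
        obtain ⟨n, hn0, hn1, lo, hi, hconf, hw⟩ := conf 0 (le_trans h1 hTTBB)
        have habs : |x (n+1) - x n| ≤ 1 :=
          abs_le.mpr ⟨by linarith [hx0 (n+1), hx1 n], by linarith [hx1 (n+1), hx0 n]⟩
        refine ⟨n, hn1, lo, hi, hconf, ?_⟩
        have h2 : (1-δ) * |x (n+1) - x n| ≤ (1-δ) * 1 :=
          mul_le_mul_of_nonneg_left habs (by linarith)
        calc hi - lo ≤ (1-δ) * |x (n+1) - x n| := hw
          _ ≤ (1-δ) * 1 := h2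
          _ = (1-δ)^(0+1) := by ring
      | succ jj ih =>
        intro h1
        obtain ⟨n, hn1, lo, hi, hconf, hw⟩ := ih (by omega)
        obtain ⟨n', hn'0, hn'1, lo', hi', hconf', hw'⟩ :=
          conf (jj+1) (le_trans h1 hTTBB)
        have hge : n + 1 ≤ n' := by
          have h2 : F (jj+1) ≤ n' := hn'0
          omega
        have h1' := hconf n' hge
        have h2' := hconf (n'+1) (by omega)
        have habs : |x (n'+1) - x n'| ≤ hi - lo :=
          abs_le.mpr ⟨by linarith [h1'.1, h1'.2, h2'.1, h2'.2],
            by linarith [h1'.1, h1'.2, h2'.1, h2'.2]⟩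
        refine ⟨n', hn'1, lo', hi', hconf', ?_⟩
        calc hi' - lo' ≤ (1-δ) * |x (n'+1) - x n'| := hw'
          _ ≤ (1-δ) * (1-δ)^(jj+1) :=
            mul_le_mul_of_nonneg_left (le_trans habs hw) (by linarith)
          _ = (1-δ)^(jj+1+1) := by ring
    -- T ≥ 1 and the power bound
    have hb0 : (0:ℝ) < 1 - δ/2 := by linarith
    have hb1 : 1 - δ/2 < 1 := by linarith
    have hz : 0 ≤ Real.logb (1 - δ/2) ε := by
      rw [Real.logb]
      exact div_nonneg_iff.mpr (Or.inr ⟨Real.log_nonpos (le_of_lt hε) (le_of_lt hlt1),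
        Real.log_nonpos (by linarith) (by linarith)⟩)
    have hceil : (0:ℤ) ≤ ⌈Real.logb (1 - δ/2) ε⌉ := Int.ceil_nonneg hz
    have hTT1 : 1 ≤ TT := by
      rw [hTT]
      omega
    have hTn : Real.logb (1 - δ/2) ε ≤ (TT:ℝ) := by
      have h5 : Real.logb (1 - δ/2) ε ≤ ((⌈Real.logb (1 - δ/2) ε⌉ : ℤ) : ℝ) := Int.le_ceil _
      have h6 : ((TT:ℕ):ℤ) = ⌈Real.logb (1 - δ/2) ε⌉ + 1 := by
        rw [hTT]
        exact Int.toNat_of_nonneg (by omega)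
      have h7 : ((TT:ℕ):ℝ) = ((⌈Real.logb (1 - δ/2) ε⌉ : ℤ) : ℝ) + 1 := by
        exact_mod_cast congrArg (Int.cast : ℤ → ℝ) h6
      linarith
    have hpow : (1 - δ/2)^TT ≤ ε := by
      have h8 : (1 - δ/2) ^ (TT:ℝ) ≤ (1 - δ/2) ^ Real.logb (1 - δ/2) ε :=
        Real.rpow_le_rpow_of_exponent_ge hb0 (le_of_lt hb1) hTn
      rw [Real.rpow_logb hb0 (ne_of_lt hb1) hε] at h8
      calc (1 - δ/2)^TT = (1 - δ/2) ^ ((TT:ℕ):ℝ) := (Real.rpow_natCast _ TT).symm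
        _ ≤ ε := h8
    -- conclude
    obtain ⟨n, hn1, lo, hi, hconf, hw⟩ := chain (TT - 1) (by omega)
    have hTT2 : TT - 1 + 1 = TT := by omega
    rw [hTT2] at hn1 hw
    refine ⟨F TT, ?_, ?_⟩
    · exact hFmono hTTBB
    · intro i hi1 hi2 j hj1 hj2
      have hFTn : n + 1 ≤ F TT := by omega
      have hci := hconf i (le_trans hFTn hi1)
      have hcj := hconf j (le_trans hFTn hj1)
      have h9 : |x i - x j| ≤ hi - lo :=
        abs_le.mpr ⟨by linarith [hci.1, hci.2, hcj.1, hcj.2],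
          by linarith [hci.1, hci.2, hcj.1, hcj.2]⟩
      calc |x i - x j| ≤ hi - lo := h9
        _ ≤ (1-δ)^TT := hw
        _ ≤ (1-δ/2)^TT := pow_le_pow_left₀ (by linarith) (by linarith) TT
        _ ≤ ε := hpow
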